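/- Fix β > 0 and real constants k > 0 and α > 0, and set C(α,k) = 3α + 21k/2 + 11. Then there exist a constant C₁ > 0 and n₀ such that the following holds for all integers n ≥ n₀: for every integer N with C(α,k)·log₂ n ≤ N ≤ n^α and every prime p with 9·n^{2k+2} ≤ p ≤ 2(2+α+2k)·N·n^{2k+2}·log₂ n, if J is a standard normal random variable and A = ⌊2^N · exp(β·J/√n)⌋ ∈ ℤ, then max_{0 ≤ ℓ ≤ p−1} | ℙ(A ≡ ℓ (mod p)) − 1/p | ≤ C₁ / (N·n^{5k+4}). -/

import Mathlib

open MeasureTheory ProbabilityTheory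

namespace Stmt10Aux

open Real MeasureTheory Set ProbabilityTheory

lemma sum_Ico_telescope' (a : ℕ → ℝ) {K M : ℕ} (h : K ≤ M) :
    ∑ m ∈ Finset.Ico K M, (a m - a (m+1)) = a K - a M := by
  induction M with
  | zero => interval_cases K; simp
  | succ M ih =>
    rcases Nat.lt_or_ge K (M+1) with hK | hK
    · have hK' : K ≤ M := Nat.lt_succ_iff.mp hK
      rw [Finset.sum_Ico_succ_top hK', ih hK']; ring
    · have : K = M + 1 := le_antisymm h hK
      subst this; simp

/-- total variation bound for a near-unimodal nonnegative sequence -/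
lemma tv_bound (a : ℕ → ℝ) (s : ℝ) (K : ℕ)
    (h0 : ∀ m, 0 ≤ a m) (hs : 0 ≤ s) (hb : ∀ m, 1 ≤ m → a m ≤ s)
    (hinc : ∀ m, 1 ≤ m → m + 3 ≤ K → a m ≤ a (m+1))
    (hdec : ∀ m, K ≤ m → a (m+1) ≤ a m) (M : ℕ) :
    ∑ m ∈ Finset.range M, |a m - a (m+1)| ≤ 11 * a 0 + 10 * s := by
  have key : ∀ m, |a m - a (m+1)| = (a (m+1) - a m) + 2 * max (a m - a (m+1)) 0 := by
    intro m
    rcases le_total (a m) (a (m+1)) with h | h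
    · rw [abs_of_nonpos (by linarith), max_eq_right (by linarith)]; ring
    · rw [abs_of_nonneg (by linarith), max_eq_left (by linarith)]; ring
  simp only [key]
  rw [Finset.sum_add_distrib, ← Finset.mul_sum]
  have tele : ∑ m ∈ Finset.range M, (a (m+1) - a m) = a M - a 0 := by
    simpa using Finset.sum_range_sub a M
  rw [tele]
  set g : ℕ → ℝ := fun m => max (a m - a (m+1)) 0 with hg
  have hg0 : ∀ m, 0 ≤ g m := fun m => le_max_right _ _
  obtain ⟨A, hA⟩ : ∃ A, A = min (K - 3) M := ⟨_, rfl⟩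
  obtain ⟨B, hB⟩ : ∃ B, B = min K M := ⟨_, rfl⟩
  have hAB : A ≤ B := by omega
  have hBM : B ≤ M := by omega
  have split : ∑ m ∈ Finset.range M, g m
      = (∑ m ∈ Finset.Ico 0 A, g m) + (∑ m ∈ Finset.Ico A B, g m)
        + (∑ m ∈ Finset.Ico B M, g m) := by
    rw [Finset.range_eq_Ico, ← Finset.sum_Ico_consecutive g (Nat.zero_le B) hBM,
        ← Finset.sum_Ico_consecutive g (Nat.zero_le A) hAB]
  have hsum1 : ∑ m ∈ Finset.Ico 0 A, g m ≤ a 0 := by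
    rw [← Finset.range_eq_Ico]
    rcases Nat.eq_zero_or_pos A with h | h
    · rw [h]; simpa using h0 0
    · obtain ⟨A', hA'⟩ : ∃ A', A = A' + 1 := ⟨A - 1, by omega⟩
      rw [hA', Finset.sum_range_succ']
      have hz : ∀ i ∈ Finset.range A', g (i + 1) = 0 := by
        intro i hi
        simp only [Finset.mem_range] at hi
        have h2 : (i+1) + 3 ≤ K := by omega
        have := hinc (i+1) (by omega) h2
        simp [hg, max_eq_right (by linarith : a (i+1) - a (i+1+1) ≤ 0)]
      rw [Finset.sum_eq_zero hz, zero_add]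
      exact max_le (by linarith [h0 1]) (h0 0)
  have hterm : ∀ m, g m ≤ a 0 + s := by
    intro m
    rcases Nat.eq_zero_or_pos m with rfl | hm
    · exact max_le (by linarith [h0 1]) (by linarith [h0 0])
    · exact max_le (by linarith [hb m hm, h0 (m+1), h0 0]) (by linarith [h0 0])
  have hsum2 : ∑ m ∈ Finset.Ico A B, g m ≤ 3 * (a 0 + s) := by
    calc ∑ m ∈ Finset.Ico A B, g m ≤ ∑ m ∈ Finset.Ico A B, (a 0 + s) :=
          Finset.sum_le_sum (fun m _ => hterm m)
      _ = ((B - A : ℕ) : ℝ) * (a 0 + s) := by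
          rw [Finset.sum_const, Nat.card_Ico]; simp [nsmul_eq_mul]; ring
      _ ≤ 3 * (a 0 + s) := by
          have h3 : ((B - A : ℕ) : ℝ) ≤ 3 := by exact_mod_cast (by omega : B - A ≤ 3)
          nlinarith [h0 0]
  have hsum3 : ∑ m ∈ Finset.Ico B M, g m ≤ a 0 + s := by
    rcases Nat.lt_or_ge M K with h | h
    · have hBM' : B = M := by omega
      rw [hBM']; simp
      exact add_nonneg (h0 0) hs
    · have hBK : B = K := by omega
      have heq : ∀ m ∈ Finset.Ico B M, g m = a m - a (m+1) := by
        intro m hm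
        simp only [Finset.mem_Ico] at hm
        exact max_eq_left (by linarith [hdec m (by omega)])
      rw [Finset.sum_congr rfl heq, sum_Ico_telescope' a hBM]
      rcases Nat.eq_zero_or_pos B with h1 | h1
      · rw [h1]; linarith [h0 M, hs]
      · linarith [hb B h1, h0 M, h0 0]
  have hM : a M ≤ a 0 + s := by
    rcases Nat.eq_zero_or_pos M with rfl | hm
    · linarith [hs]
    · linarith [hb M hm, h0 0]
  linarith [h0 0, h0 M, hs, split ▸ (by linarith : (∑ m ∈ Finset.Ico 0 A, g m) + (∑ m ∈ Finset.Ico A B, g m) + (∑ m ∈ Finset.Ico B M, g m) ≤ 5 * a 0 + 4 * s)]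

lemma abs_sub_le_sum_Ico' (a : ℕ → ℝ) {x y : ℕ} (h : x ≤ y) :
    |a x - a y| ≤ ∑ m ∈ Finset.Ico x y, |a m - a (m+1)| := by
  induction y with
  | zero => interval_cases x; simp
  | succ y ih =>
    rcases Nat.lt_or_ge x (y+1) with hx | hx
    · have hx' : x ≤ y := Nat.lt_succ_iff.mp hx
      rw [Finset.sum_Ico_succ_top hx']
      calc |a x - a (y+1)| ≤ |a x - a y| + |a y - a (y+1)| := by
            have h1 := abs_sub (a x - a y) (-(a y - a (y+1)))
            have := abs_sub_abs_le_abs_sub (a x - a y) (a y - a (y+1))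
            calc |a x - a (y+1)| = |(a x - a y) + (a y - a (y+1))| := by ring_nf
              _ ≤ |a x - a y| + |a y - a (y+1)| := abs_add_le _ _
        _ ≤ (∑ m ∈ Finset.Ico x y, |a m - a (m+1)|) + |a y - a (y+1)| := by
            linarith [ih hx']
    · have : x = y + 1 := le_antisymm h hx
      subst this; simp

set_option maxHeartbeats 1000000 in
/-- main combinatorial reduction: distance of the residue-class sum from `1/p` is at most the
total variation of the sequence. -/
lemma block_bound (a : ℕ → ℝ) (h0 : ∀ m, 0 ≤ a m) (hsum : HasSum a 1)
    (p ℓ : ℕ) (hp : 0 < p) (hℓ : ℓ < p) (V : ℝ)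
    (hV : ∀ M, ∑ m ∈ Finset.range M, |a m - a (m+1)| ≤ V) :
    |(∑' j : ℕ, a (j * p + ℓ)) - 1 / p| ≤ V := by
  haveI : NeZero p := ⟨hp.ne'⟩
  set d : ℕ → ℝ := fun m => |a m - a (m+1)| with hd
  set W : ℕ → ℝ := fun j => ∑ m ∈ Finset.Ico (j*p) ((j+1)*p), d m with hW
  have hW0 : ∀ j, 0 ≤ W j := fun j => Finset.sum_nonneg (fun m _ => abs_nonneg _)
  have hWpart : ∀ J, ∑ j ∈ Finset.range J, W j ≤ V := by
    intro J
    have : ∑ j ∈ Finset.range J, W j = ∑ m ∈ Finset.range (J*p), d m := by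
      induction J with
      | zero => simp
      | succ J ih =>
        rw [Finset.sum_range_succ, ih, Finset.range_eq_Ico, Finset.range_eq_Ico]
        exact Finset.sum_Ico_consecutive d (Nat.zero_le (J*p)) (by nlinarith : J*p ≤ (J+1)*p)
    rw [this]; exact hV _
  have hWsm : Summable W := summable_of_sum_range_le hW0 hWpart
  have hWts : ∑' j, W j ≤ V := tsum_le_of_sum_range_le hW0 hWpart
  -- fiberwise sums
  have hsum2 : HasSum (fun q : ℕ × Fin p => a (q.1 * p + (q.2 : ℕ))) 1 := by
    have h2 := ((Nat.divModEquiv p).symm.hasSum_iff (f := a) (a := 1)).mpr hsum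
    simpa [Function.comp_def, Nat.divModEquiv] using h2
  have hsum3 : HasSum (fun j => ∑ i ∈ Finset.range p, a (j * p + i)) 1 := by
    have := hsum2.prod_fiberwise (g := fun j => ∑ i : Fin p, a (j * p + (i:ℕ)))
      (fun j => hasSum_fintype _)
    convert this using 2 with j
    exact (Fin.sum_univ_eq_sum_range (fun i => a (j*p+i)) p).symm
  set b : ℕ → ℝ := fun j => (1/p : ℝ) * ∑ i ∈ Finset.range p, a (j * p + i) with hb
  have hbsum : HasSum b (1/p) := by
    have := hsum3.mul_left (1/p : ℝ)
    rw [mul_one] at this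
    exact this
  have hinj : Function.Injective (fun j : ℕ => j * p + ℓ) := by
    intro x y hxy
    simp only at hxy
    have h1 : x * p = y * p := by omega
    exact Nat.eq_of_mul_eq_mul_right hp h1
  have hasm : Summable (fun j : ℕ => a (j * p + ℓ)) := by
    apply hsum.summable.comp_injective hinj
  -- per-block bound
  have hblock : ∀ j, |a (j*p+ℓ) - b j| ≤ W j := by
    intro j
    have habs : ∀ i, i < p → |a (j*p+ℓ) - a (j*p+i)| ≤ W j := by
      intro i hi
      have sub1 : ∀ x y : ℕ, j*p ≤ x → y ≤ (j+1)*p → x ≤ y →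
          |a x - a y| ≤ W j := by
        intro x y hx hy hxy
        refine le_trans (abs_sub_le_sum_Ico' a hxy) ?_
        apply Finset.sum_le_sum_of_subset_of_nonneg
        · apply Finset.Ico_subset_Ico hx hy
        · intro m _ _; exact abs_nonneg _
      rcases le_total (j*p+ℓ) (j*p+i) with h | h
      · exact sub1 _ _ (by omega) (by nlinarith) h
      · rw [abs_sub_comm]; exact sub1 _ _ (by omega) (by nlinarith) h
    have : a (j*p+ℓ) - b j = (1/p : ℝ) * ∑ i ∈ Finset.range p, (a (j*p+ℓ) - a (j*p+i)) := by
      rw [Finset.sum_sub_distrib, hb]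
      have : ∑ _i ∈ Finset.range p, a (j*p+ℓ) = (p : ℝ) * a (j*p+ℓ) := by
        rw [Finset.sum_const, Finset.card_range, nsmul_eq_mul]
      rw [this, mul_sub]
      have hp' : (p:ℝ) ≠ 0 := Nat.cast_ne_zero.mpr hp.ne'
      field_simp
    rw [this, abs_mul, abs_of_nonneg (by positivity : (0:ℝ) ≤ 1/p)]
    calc (1/p : ℝ) * |∑ i ∈ Finset.range p, (a (j*p+ℓ) - a (j*p+i))|
        ≤ (1/p : ℝ) * ∑ i ∈ Finset.range p, |a (j*p+ℓ) - a (j*p+i)| := by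
          apply mul_le_mul_of_nonneg_left (Finset.abs_sum_le_sum_abs _ _) (by positivity)
      _ ≤ (1/p : ℝ) * ∑ _i ∈ Finset.range p, W j := by
          apply mul_le_mul_of_nonneg_left ?_ (by positivity)
          exact Finset.sum_le_sum (fun i hi => habs i (Finset.mem_range.mp hi))
      _ = W j := by
          rw [Finset.sum_const, Finset.card_range, nsmul_eq_mul]
          have hp' : (p:ℝ) ≠ 0 := Nat.cast_ne_zero.mpr hp.ne'
          field_simp
  have hdiff_sm : Summable (fun j => |a (j*p+ℓ) - b j|) :=
    Summable.of_nonneg_of_le (fun j => abs_nonneg _) hblock hWsm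
  have hdiff_sm' : Summable (fun j => a (j*p+ℓ) - b j) := hdiff_sm.of_abs
  have e1 : (∑' j : ℕ, a (j * p + ℓ)) - 1 / p = ∑' j : ℕ, (a (j * p + ℓ) - b j) := by
    rw [Summable.tsum_sub hasm hbsum.summable, hbsum.tsum_eq]
  rw [e1]
  have e2 : |∑' j : ℕ, (a (j * p + ℓ) - b j)| ≤ ∑' j : ℕ, |a (j * p + ℓ) - b j| := by
    have hn : Summable (fun j => ‖a (j * p + ℓ) - b j‖) := by
      simpa [Real.norm_eq_abs] using hdiff_sm
    simpa [Real.norm_eq_abs] using norm_tsum_le_tsum_norm hn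
  have e3 : ∑' j : ℕ, |a (j * p + ℓ) - b j| ≤ ∑' j, W j := Summable.tsum_le_tsum hblock hdiff_sm hWsm
  linarith

noncomputable def fdens (c T t : ℝ) : ℝ :=
  (Real.sqrt (2*Real.pi))⁻¹ * (c*t)⁻¹ * Real.exp (-(Real.log t - Real.log T)^2/(2*c^2))

lemma fdens_nonneg {c T : ℝ} (hc : 0 < c) (t : ℝ) (ht : 0 < t) : 0 ≤ fdens c T t := by
  unfold fdens; positivity

lemma fdens_eq_exp {c T : ℝ} (hc : 0 < c) {t : ℝ} (ht : 0 < t) :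
    fdens c T t = (Real.sqrt (2*Real.pi))⁻¹ * c⁻¹
      * Real.exp (-(Real.log t) - (Real.log t - Real.log T)^2/(2*c^2)) := by
  unfold fdens
  rw [mul_inv, sub_eq_add_neg (-(Real.log t)), Real.exp_add, Real.exp_neg, Real.exp_log ht]
  ring

lemma fdens_le {c T : ℝ} (hc : 0 < c) (hT : 0 < T) {t : ℝ} (ht : 0 < t) :
    fdens c T t ≤ Real.exp (c^2/2) / (c * T) := by
  rw [fdens_eq_exp hc ht]
  set u := Real.log t
  set L := Real.log T
  have h2c : (0:ℝ) < 2*c^2 := by positivity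
  have e1 : (u - L)^2/(2*c^2) * (2*c^2) = (u - L)^2 := div_mul_cancel₀ _ h2c.ne'
  have key : -u - (u-L)^2/(2*c^2) ≤ c^2/2 - L := by
    nlinarith [sq_nonneg (u - L + c^2), e1, h2c]
  have h1 : Real.exp (-u - (u-L)^2/(2*c^2)) ≤ Real.exp (c^2/2 - L) := Real.exp_le_exp.mpr key
  have h2 : Real.exp (c^2/2 - L) = Real.exp (c^2/2) / T := by
    rw [Real.exp_sub, Real.exp_log hT]
  have h3 : (Real.sqrt (2*Real.pi))⁻¹ ≤ 1 := by
    rw [inv_le_one_iff₀]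
    right
    rw [show (1:ℝ) = Real.sqrt 1 by simp]
    apply Real.sqrt_le_sqrt
    nlinarith [Real.pi_gt_three]
  calc (Real.sqrt (2*Real.pi))⁻¹ * c⁻¹ * Real.exp (-u - (u-L)^2/(2*c^2))
      ≤ 1 * c⁻¹ * (Real.exp (c^2/2) / T) := by
        apply mul_le_mul (by apply mul_le_mul_of_nonneg_right h3 (by positivity)) (h2 ▸ h1)
          (Real.exp_pos _).le (by positivity)
    _ = Real.exp (c^2/2) / (c * T) := by field_simp

lemma fdens_mono_inc {c T : ℝ} (hc : 0 < c) (hT : 0 < T) {t₁ t₂ : ℝ}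
    (h1 : 0 < t₁) (h12 : t₁ ≤ t₂) (h2 : t₂ ≤ T * Real.exp (-(c^2))) :
    fdens c T t₁ ≤ fdens c T t₂ := by
  have h1' : 0 < t₂ := lt_of_lt_of_le h1 h12
  rw [fdens_eq_exp hc h1, fdens_eq_exp hc h1']
  apply mul_le_mul_of_nonneg_left _ (by positivity)
  apply Real.exp_le_exp.mpr
  set u₁ := Real.log t₁
  set u₂ := Real.log t₂
  set L := Real.log T
  have hu : u₁ ≤ u₂ := Real.log_le_log h1 h12
  have hu2 : u₂ ≤ L - c^2 := by
    calc u₂ ≤ Real.log (T * Real.exp (-(c^2))) := Real.log_le_log h1' h2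
      _ = L - c^2 := by rw [Real.log_mul hT.ne' (Real.exp_pos _).ne', Real.log_exp]; ring
  have h2c : (0:ℝ) < 2*c^2 := by positivity
  have e1 : (u₁ - L)^2/(2*c^2) * (2*c^2) = (u₁ - L)^2 := div_mul_cancel₀ _ h2c.ne'
  have e2 : (u₂ - L)^2/(2*c^2) * (2*c^2) = (u₂ - L)^2 := div_mul_cancel₀ _ h2c.ne'
  have hprod : 0 ≤ (u₂ - u₁) * ((L - c^2 - u₁) + (L - c^2 - u₂)) := by
    apply mul_nonneg (by linarith)
    linarith
  nlinarith [e1, e2, hprod, h2c]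

lemma fdens_mono_dec {c T : ℝ} (hc : 0 < c) (hT : 0 < T) {t₁ t₂ : ℝ}
    (h1 : T * Real.exp (-(c^2)) ≤ t₁) (h12 : t₁ ≤ t₂) :
    fdens c T t₂ ≤ fdens c T t₁ := by
  have h0 : (0:ℝ) < T * Real.exp (-(c^2)) := by positivity
  have h1' : 0 < t₁ := lt_of_lt_of_le h0 h1
  have h2' : 0 < t₂ := lt_of_lt_of_le h1' h12
  rw [fdens_eq_exp hc h1', fdens_eq_exp hc h2']
  apply mul_le_mul_of_nonneg_left _ (by positivity)
  apply Real.exp_le_exp.mpr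
  set u₁ := Real.log t₁
  set u₂ := Real.log t₂
  set L := Real.log T
  have hu : u₁ ≤ u₂ := Real.log_le_log h1' h12
  have hu1 : L - c^2 ≤ u₁ := by
    calc L - c^2 = Real.log (T * Real.exp (-(c^2))) := by
          rw [Real.log_mul hT.ne' (Real.exp_pos _).ne', Real.log_exp]; ring
      _ ≤ u₁ := Real.log_le_log h0 h1
  have h2c : (0:ℝ) < 2*c^2 := by positivity
  have e1 : (u₁ - L)^2/(2*c^2) * (2*c^2) = (u₁ - L)^2 := div_mul_cancel₀ _ h2c.ne'
  have e2 : (u₂ - L)^2/(2*c^2) * (2*c^2) = (u₂ - L)^2 := div_mul_cancel₀ _ h2c.ne'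
  have hprod : 0 ≤ (u₂ - u₁) * ((u₁ - (L - c^2)) + (u₂ - (L - c^2))) := by
    apply mul_nonneg (by linarith)
    linarith
  nlinarith [e1, e2, hprod, h2c]

lemma fdens_contOn {c T : ℝ} (hc : 0 < c) : ContinuousOn (fdens c T) (Ioi 0) := by
  unfold fdens
  apply ContinuousOn.mul
  · apply ContinuousOn.mul continuousOn_const
    apply ContinuousOn.inv₀ (continuousOn_const.mul continuousOn_id)
    intro t ht
    exact mul_ne_zero hc.ne' (ne_of_gt ht)
  · apply Real.continuous_exp.comp_continuousOn
    apply ContinuousOn.div_const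
    apply ContinuousOn.neg
    apply ContinuousOn.pow
    apply ContinuousOn.sub _ continuousOn_const
    exact Real.continuousOn_log.mono (fun t ht => ne_of_gt ht)

lemma gauss_Ico {x y : ℝ} (h : x ≤ y) :
    ((gaussianReal 0 1) (Ico x y)).toReal = ∫ t in x..y, gaussianPDFReal 0 1 t := by
  rw [gaussianReal_apply_eq_integral 0 one_ne_zero,
    ENNReal.toReal_ofReal (setIntegral_nonneg measurableSet_Ico
      (fun t _ => gaussianPDFReal_nonneg 0 1 t)),
    integral_Ico_eq_integral_Ioo, ← integral_Ioc_eq_integral_Ioo,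
    intervalIntegral.integral_of_le h]

lemma gauss_Iio (y : ℝ) :
    ((gaussianReal 0 1) (Iio y)).toReal = ∫ t in Iio y, gaussianPDFReal 0 1 t := by
  rw [gaussianReal_apply_eq_integral 0 one_ne_zero,
    ENNReal.toReal_ofReal (setIntegral_nonneg measurableSet_Iio
      (fun t _ => gaussianPDFReal_nonneg 0 1 t))]

lemma gauss_subst {c T : ℝ} (hc : 0 < c) (hT : 0 < T) {u v : ℝ} (hu : 0 < u) (hv : 0 < v) :
    ∫ x in ((Real.log u - Real.log T)/c)..((Real.log v - Real.log T)/c),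
      gaussianPDFReal 0 1 x = ∫ t in u..v, fdens c T t := by
  set F : ℝ → ℝ := fun x => T * Real.exp (c*x) with hF
  set F' : ℝ → ℝ := fun x => T * (Real.exp (c*x) * c) with hF'
  have hderiv : ∀ x, HasDerivAt F (F' x) x := by
    intro x
    have h1 : HasDerivAt (fun x : ℝ => c * x) c x := by
      simpa using (hasDerivAt_id x).const_mul c
    exact ((Real.hasDerivAt_exp (c*x)).comp x h1).const_mul T
  have hFpos : ∀ x, 0 < F x := fun x => by simp only [hF]; positivity
  have hFlog : ∀ w : ℝ, 0 < w → F ((Real.log w - Real.log T)/c) = w := by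
    intro w hw
    show T * Real.exp (c * ((Real.log w - Real.log T)/c)) = w
    rw [mul_div_cancel₀ _ hc.ne', Real.exp_sub, Real.exp_log hw, Real.exp_log hT]
    field_simp
  set a := (Real.log u - Real.log T)/c with ha
  set b := (Real.log v - Real.log T)/c with hb
  have hpt : ∀ x, F' x • (fdens c T ∘ F) x = gaussianPDFReal 0 1 x := by
    intro x
    have hlog : Real.log (T * Real.exp (c*x)) = Real.log T + c*x := by
      rw [Real.log_mul hT.ne' (Real.exp_pos _).ne', Real.log_exp]
    have hc2 : -(Real.log T + c*x - Real.log T)^2/(2*c^2) = -x^2/2 := by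
      have : (Real.log T + c*x - Real.log T)^2 = c^2 * x^2 := by ring
      rw [this]
      field_simp
    simp only [Function.comp_apply, hF', hF, fdens, hlog, smul_eq_mul, hc2, gaussianPDFReal]
    have hexp : (0:ℝ) < Real.exp (c * x) := Real.exp_pos _
    have hsq : Real.sqrt (2 * Real.pi) ≠ 0 := by
      have : (0:ℝ) < 2 * Real.pi := by positivity
      positivity
    push_cast
    rw [mul_one, mul_one, sub_zero]
    field_simp
  have key : ∫ x in a..b, F' x • (fdens c T ∘ F) x = ∫ t in F a..F b, fdens c T t := by
    apply intervalIntegral.integral_comp_smul_deriv' (fun x _ => hderiv x)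
    · apply Continuous.continuousOn
      fun_prop
    · apply (fdens_contOn hc).mono
      intro y hy
      obtain ⟨x, _, rfl⟩ := hy
      exact hFpos x
  calc ∫ x in a..b, gaussianPDFReal 0 1 x
      = ∫ x in a..b, F' x • (fdens c T ∘ F) x := by
        apply intervalIntegral.integral_congr
        intro x _
        exact (hpt x).symm
    _ = ∫ t in F a..F b, fdens c T t := key
    _ = ∫ t in u..v, fdens c T t := by rw [hFlog u hu, hFlog v hv]

lemma floor_set_meas {c T : ℝ} (z : ℤ) :
    MeasurableSet {x : ℝ | ⌊T * Real.exp (c*x)⌋ = z} := by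
  have h : Measurable (fun x : ℝ => ⌊T * Real.exp (c*x)⌋) :=
    Int.measurable_floor.comp (by fun_prop)
  exact h (measurableSet_singleton z)

lemma floor_set_eq {c T : ℝ} (hc : 0 < c) (hT : 0 < T) (m : ℕ) (hm : 1 ≤ m) :
    {x : ℝ | ⌊T * Real.exp (c*x)⌋ = (m:ℤ)} =
      Ico ((Real.log m - Real.log T)/c) ((Real.log ((m:ℝ)+1) - Real.log T)/c) := by
  ext x
  have hFpos : (0:ℝ) < T * Real.exp (c*x) := by positivity
  have hlog : Real.log (T * Real.exp (c*x)) = Real.log T + c*x := by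
    rw [Real.log_mul hT.ne' (Real.exp_pos _).ne', Real.log_exp]
  have hm0 : (0:ℝ) < (m:ℝ) := by exact_mod_cast hm
  have hm1 : (0:ℝ) < (m:ℝ)+1 := by linarith
  simp only [mem_setOf_eq, mem_Ico, Int.floor_eq_iff, Int.cast_natCast]
  constructor
  · rintro ⟨h1, h2⟩
    constructor
    · rw [div_le_iff₀ hc]
      have := (Real.log_le_log_iff hm0 hFpos).mpr h1
      rw [hlog] at this
      linarith
    · rw [lt_div_iff₀ hc]
      have h2' : T * Real.exp (c*x) < (m:ℝ)+1 := by push_cast at h2 ⊢; linarith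
      have := (Real.log_lt_log_iff hFpos hm1).mpr h2'
      rw [hlog] at this
      linarith
  · rintro ⟨h1, h2⟩
    rw [div_le_iff₀ hc] at h1
    rw [lt_div_iff₀ hc] at h2
    constructor
    · have : Real.log (m:ℝ) ≤ Real.log (T * Real.exp (c*x)) := by rw [hlog]; linarith
      exact (Real.log_le_log_iff hm0 hFpos).mp this
    · have : Real.log (T * Real.exp (c*x)) < Real.log ((m:ℝ)+1) := by rw [hlog]; linarith
      have := (Real.log_lt_log_iff hFpos hm1).mp this
      push_cast
      linarith

lemma floor_set_zero {c T : ℝ} (hc : 0 < c) (hT : 0 < T) :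
    {x : ℝ | ⌊T * Real.exp (c*x)⌋ = (0:ℤ)} = Iio (-Real.log T/c) := by
  ext x
  have hFpos : (0:ℝ) < T * Real.exp (c*x) := by positivity
  have hlog : Real.log (T * Real.exp (c*x)) = Real.log T + c*x := by
    rw [Real.log_mul hT.ne' (Real.exp_pos _).ne', Real.log_exp]
  simp only [mem_setOf_eq, mem_Iio, Int.floor_eq_iff, Int.cast_zero]
  constructor
  · rintro ⟨_, h2⟩
    rw [zero_add] at h2
    have := (Real.log_lt_log_iff hFpos one_pos).mpr h2
    rw [hlog, Real.log_one] at this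
    rw [lt_div_iff₀ hc]
    linarith
  · intro h
    refine ⟨hFpos.le, ?_⟩
    rw [lt_div_iff₀ hc] at h
    rw [zero_add]
    have : Real.log (T * Real.exp (c*x)) < Real.log 1 := by
      rw [hlog, Real.log_one]; linarith
    exact (Real.log_lt_log_iff hFpos one_pos).mp this

lemma am_le {c T : ℝ} (hc : 0 < c) (hT : 0 < T) {m : ℕ} (hm : 1 ≤ m) :
    ∫ t in (m:ℝ)..((m:ℝ)+1), fdens c T t ≤ Real.exp (c^2/2) / (c*T) := by
  have hm0 : (0:ℝ) < (m:ℝ) := by exact_mod_cast hm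
  have hint : IntervalIntegrable (fdens c T) volume (m:ℝ) ((m:ℝ)+1) := by
    apply ContinuousOn.intervalIntegrable
    apply (fdens_contOn hc).mono
    rw [uIcc_of_le (by linarith)]
    intro t ht
    exact lt_of_lt_of_le hm0 ht.1
  calc ∫ t in (m:ℝ)..((m:ℝ)+1), fdens c T t
      ≤ ∫ _t in (m:ℝ)..((m:ℝ)+1), (Real.exp (c^2/2) / (c*T)) := by
        apply intervalIntegral.integral_mono_on (by linarith) hint intervalIntegrable_const
        intro t ht
        exact fdens_le hc hT (lt_of_lt_of_le hm0 ht.1)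
    _ = Real.exp (c^2/2) / (c*T) := by
        rw [intervalIntegral.integral_const]
        simp

lemma am_mono_inc {c T : ℝ} (hc : 0 < c) (hT : 0 < T) {m : ℕ} (hm : 1 ≤ m)
    (h : (m:ℝ)+2 ≤ T * Real.exp (-(c^2))) :
    ∫ t in (m:ℝ)..((m:ℝ)+1), fdens c T t
      ≤ ∫ t in ((m:ℝ)+1)..((m:ℝ)+2), fdens c T t := by
  have hm0 : (0:ℝ) < (m:ℝ) := by exact_mod_cast hm
  have he : ∫ t in ((m:ℝ)+1)..((m:ℝ)+2), fdens c T t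
      = ∫ t in (m:ℝ)..((m:ℝ)+1), fdens c T (t+1) := by
    rw [intervalIntegral.integral_comp_add_right (fun t => fdens c T t) 1]
    have e : (m:ℝ)+1+1 = (m:ℝ)+2 := by ring
    rw [e]
  rw [he]
  have hint1 : IntervalIntegrable (fdens c T) volume (m:ℝ) ((m:ℝ)+1) := by
    apply ContinuousOn.intervalIntegrable
    apply (fdens_contOn hc).mono
    rw [uIcc_of_le (by linarith)]
    exact fun t ht => lt_of_lt_of_le hm0 ht.1
  have hint2 : IntervalIntegrable (fun t => fdens c T (t+1)) volume (m:ℝ) ((m:ℝ)+1) := by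
    apply ContinuousOn.intervalIntegrable
    apply ContinuousOn.comp (fdens_contOn hc) (by fun_prop)
    rw [uIcc_of_le (by linarith)]
    exact fun t ht => by simp; linarith [ht.1]
  apply intervalIntegral.integral_mono_on (by linarith) hint1 hint2
  intro t ht
  exact fdens_mono_inc hc hT (lt_of_lt_of_le hm0 ht.1) (by linarith) (by linarith [ht.2])

lemma am_mono_dec {c T : ℝ} (hc : 0 < c) (hT : 0 < T) {m : ℕ} (hm : 1 ≤ m)
    (h : T * Real.exp (-(c^2)) ≤ (m:ℝ)) :
    ∫ t in ((m:ℝ)+1)..((m:ℝ)+2), fdens c T t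
      ≤ ∫ t in (m:ℝ)..((m:ℝ)+1), fdens c T t := by
  have hm0 : (0:ℝ) < (m:ℝ) := by exact_mod_cast hm
  have he : ∫ t in ((m:ℝ)+1)..((m:ℝ)+2), fdens c T t
      = ∫ t in (m:ℝ)..((m:ℝ)+1), fdens c T (t+1) := by
    rw [intervalIntegral.integral_comp_add_right (fun t => fdens c T t) 1]
    have e : (m:ℝ)+1+1 = (m:ℝ)+2 := by ring
    rw [e]
  rw [he]
  have hint1 : IntervalIntegrable (fdens c T) volume (m:ℝ) ((m:ℝ)+1) := by
    apply ContinuousOn.intervalIntegrable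
    apply (fdens_contOn hc).mono
    rw [uIcc_of_le (by linarith)]
    exact fun t ht => lt_of_lt_of_le hm0 ht.1
  have hint2 : IntervalIntegrable (fun t => fdens c T (t+1)) volume (m:ℝ) ((m:ℝ)+1) := by
    apply ContinuousOn.intervalIntegrable
    apply ContinuousOn.comp (fdens_contOn hc) (by fun_prop)
    rw [uIcc_of_le (by linarith)]
    exact fun t ht => by simp; linarith [ht.1]
  apply intervalIntegral.integral_mono_on (by linarith) hint2 hint1
  intro t ht
  exact fdens_mono_dec hc hT (by linarith [ht.1]) (by linarith)

lemma am_nonneg {c T : ℝ} (hc : 0 < c) {m : ℕ} (hm : 1 ≤ m) :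
    0 ≤ ∫ t in (m:ℝ)..((m:ℝ)+1), fdens c T t := by
  have hm0 : (0:ℝ) < (m:ℝ) := by exact_mod_cast hm
  apply intervalIntegral.integral_nonneg (by linarith)
  intro t ht
  exact fdens_nonneg hc t (lt_of_lt_of_le hm0 ht.1)

lemma gpdf_eq (x : ℝ) :
    gaussianPDFReal 0 1 x = (Real.sqrt (2*Real.pi))⁻¹ * Real.exp (-x^2/2) := by
  simp [gaussianPDFReal]

lemma tail_bound {y : ℝ} (hy : y ≤ -2) :
    ∫ x in Iio y, gaussianPDFReal 0 1 x ≤ Real.exp y := by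
  have hmono : ∀ x ∈ Iio y, gaussianPDFReal 0 1 x ≤ Real.exp x := by
    intro x hx
    simp only [mem_Iio] at hx
    have hx2 : x ≤ -2 := by linarith
    have h1 : (Real.sqrt (2*Real.pi))⁻¹ ≤ 1 := by
      rw [inv_le_one_iff₀]
      right
      rw [show (1:ℝ) = Real.sqrt 1 by simp]
      apply Real.sqrt_le_sqrt
      nlinarith [Real.pi_gt_three]
    have h2 : Real.exp (-x^2/2) ≤ Real.exp x := by
      apply Real.exp_le_exp.mpr
      nlinarith
    rw [gpdf_eq]
    calc (Real.sqrt (2*Real.pi))⁻¹ * Real.exp (-x^2/2)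
        ≤ 1 * Real.exp x := mul_le_mul h1 h2 (Real.exp_pos _).le one_pos.le
      _ = Real.exp x := one_mul _
  calc ∫ x in Iio y, gaussianPDFReal 0 1 x
      ≤ ∫ x in Iio y, Real.exp x := by
        apply setIntegral_mono_on
        · exact (integrable_gaussianPDFReal 0 1).restrict
        · exact (integrableOn_exp_Iic y).mono_set Iio_subset_Iic_self
        · exact measurableSet_Iio
        · exact hmono
    _ = Real.exp y := by
        rw [← integral_Iic_eq_integral_Iio, integral_exp_Iic]

lemma floor_disj {c T : ℝ} : Pairwise (Function.onFun Disjoint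
    (fun m : ℕ => {x : ℝ | ⌊T * Real.exp (c*x)⌋ = (m:ℤ)})) := by
  intro m m' hmm'
  simp only [Function.onFun]
  apply Set.disjoint_left.mpr
  intro x hx hx'
  simp only [mem_setOf_eq] at hx hx'
  rw [hx] at hx'
  exact hmm' (by exact_mod_cast hx')

lemma floor_cover {c T : ℝ} (hT : 0 < T) :
    (⋃ m : ℕ, {x : ℝ | ⌊T * Real.exp (c*x)⌋ = (m:ℤ)}) = univ := by
  ext x
  simp only [mem_iUnion, mem_setOf_eq, mem_univ, iff_true]
  have hpos : (0:ℝ) ≤ T * Real.exp (c*x) := by positivity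
  have h0 : (0:ℤ) ≤ ⌊T * Real.exp (c*x)⌋ := Int.le_floor.mpr (by exact_mod_cast hpos)
  exact ⟨(⌊T * Real.exp (c*x)⌋).toNat, (Int.toNat_of_nonneg h0).symm⟩

lemma hasSum_a {c T : ℝ} (hc : 0 < c) (hT : 0 < T) :
    HasSum (fun m : ℕ =>
      ((gaussianReal 0 1) {x : ℝ | ⌊T * Real.exp (c*x)⌋ = (m:ℤ)}).toReal) 1 := by
  set μ := gaussianReal 0 1
  have hμ : ∀ m : ℕ, μ {x : ℝ | ⌊T * Real.exp (c*x)⌋ = (m:ℤ)} ≠ ⊤ :=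
    fun m => measure_ne_top μ _
  have htsum : ∑' m : ℕ, μ {x : ℝ | ⌊T * Real.exp (c*x)⌋ = (m:ℤ)} = 1 := by
    rw [← measure_iUnion floor_disj (fun m => floor_set_meas (m:ℤ))]
    rw [floor_cover hT]
    exact measure_univ
  have hsm : Summable (fun m : ℕ =>
      (μ {x : ℝ | ⌊T * Real.exp (c*x)⌋ = (m:ℤ)}).toReal) := by
    apply ENNReal.summable_toReal
    rw [htsum]; exact ENNReal.one_ne_top
  have := ENNReal.tsum_toReal_eq hμ
  rw [htsum] at this
  have h1 : ∑' m : ℕ, (μ {x : ℝ | ⌊T * Real.exp (c*x)⌋ = (m:ℤ)}).toReal = 1 := by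
    rw [← this]; simp
  exact h1 ▸ hsm.hasSum

lemma mu_residue {c T : ℝ} (hc : 0 < c) (hT : 0 < T) (p ℓ : ℕ) (hp : 0 < p) (hℓ : ℓ < p) :
    ((gaussianReal 0 1) {x : ℝ | ⌊T * Real.exp (c*x)⌋ ≡ (ℓ:ℤ) [ZMOD (p:ℤ)]}).toReal
      = ∑' j : ℕ, ((gaussianReal 0 1)
          {x : ℝ | ⌊T * Real.exp (c*x)⌋ = ((j*p+ℓ : ℕ):ℤ)}).toReal := by
  set μ := gaussianReal 0 1
  have hset : {x : ℝ | ⌊T * Real.exp (c*x)⌋ ≡ (ℓ:ℤ) [ZMOD (p:ℤ)]}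
      = ⋃ j : ℕ, {x : ℝ | ⌊T * Real.exp (c*x)⌋ = ((j*p+ℓ : ℕ):ℤ)} := by
    ext x
    simp only [mem_iUnion, mem_setOf_eq]
    set m := ⌊T * Real.exp (c*x)⌋ with hm
    have hpos : (0:ℝ) ≤ T * Real.exp (c*x) := by positivity
    have h0 : (0:ℤ) ≤ m := Int.le_floor.mpr (by exact_mod_cast hpos)
    constructor
    · intro h
      have hdvd : (p:ℤ) ∣ m - ℓ := (Int.modEq_iff_dvd.mp h.symm)
      obtain ⟨q, hq⟩ := hdvd
      have hq0 : 0 ≤ q := by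
        by_contra hq0
        push_neg at hq0
        have : q ≤ -1 := by omega
        have hppos : (0:ℤ) < (p:ℤ) := by exact_mod_cast hp
        nlinarith [h0, hq, (show (ℓ:ℤ) < (p:ℤ) by exact_mod_cast hℓ)]
      refine ⟨q.toNat, ?_⟩
      have : m = q * p + ℓ := by linarith [hq]
      rw [this]
      push_cast [Int.toNat_of_nonneg hq0]
      ring
    · rintro ⟨j, hj⟩
      rw [hj]
      have : ((j*p+ℓ : ℕ):ℤ) - ℓ = (p:ℤ) * j := by push_cast; ring
      exact (Int.modEq_iff_dvd.mpr ⟨j, by linarith [this]⟩).symm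
  rw [hset]
  have hdisj : Pairwise (Function.onFun Disjoint
      (fun j : ℕ => {x : ℝ | ⌊T * Real.exp (c*x)⌋ = ((j*p+ℓ : ℕ):ℤ)})) := by
    intro j j' hjj'
    simp only [Function.onFun]
    apply Set.disjoint_left.mpr
    intro x hx hx'
    simp only [mem_setOf_eq] at hx hx'
    rw [hx] at hx'
    have : j*p+ℓ = j'*p+ℓ := by exact_mod_cast hx'
    have : j = j' := by
      have h1 : j*p = j'*p := by omega
      exact Nat.eq_of_mul_eq_mul_right hp h1
    exact hjj' this
  rw [measure_iUnion hdisj (fun j => floor_set_meas _)]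
  rw [ENNReal.tsum_toReal_eq (fun j => measure_ne_top μ _)]


end Stmt10Aux

open Stmt10Aux Real Set in

set_option maxHeartbeats 2000000 in
theorem stmt10 (β k α : ℝ) (hβ : 0 < β) (hk : 0 < k) (hα : 0 < α) :
    ∃ C₁ > (0 : ℝ), ∃ n₀ : ℕ, ∀ n : ℕ, n₀ ≤ n →
      ∀ N : ℕ, (3 * α + 21 * k / 2 + 11) * Real.logb 2 n ≤ (N : ℝ) →
        (N : ℝ) ≤ (n : ℝ) ^ α →
      ∀ p : ℕ, p.Prime → 9 * (n : ℝ) ^ (2 * k + 2) ≤ (p : ℝ) →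
        (p : ℝ) ≤ 2 * (2 + α + 2 * k) * N * (n : ℝ) ^ (2 * k + 2) * Real.logb 2 n →
      ∀ ℓ : ℕ, ℓ ≤ p - 1 →
      |(gaussianReal 0 1
          {x : ℝ | ⌊(2 : ℝ) ^ N * Real.exp (β * x / Real.sqrt n)⌋ ≡ (ℓ : ℤ) [ZMOD (p : ℤ)]}).toReal
        - 1 / p| ≤ C₁ / ((N : ℝ) * (n : ℝ) ^ (5 * k + 4)) := by
  set D : ℝ := 11 + 10 * Real.exp (β^2/2) / β with hD_def
  have hDpos : 0 < D := by positivity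
  refine ⟨1, one_pos, max 2 (max (⌈β^2⌉₊ + 1) (⌈D⌉₊ + 1)), ?_⟩
  intro n hn N hN1 hN2 p hpprime hp1 hp2 ℓ hℓ'
  -- basic numeric facts
  have hn2 : 2 ≤ n := le_trans (le_max_left _ _) hn
  have hn0 : (0:ℝ) < n := by positivity
  have hn1 : (1:ℝ) ≤ n := by exact_mod_cast hn2.trans' one_le_two
  have hβ2n : β^2 ≤ n := by
    have h1 : ⌈β^2⌉₊ + 1 ≤ n := le_trans (le_trans (le_max_left _ _) (le_max_right _ _)) hn
    calc β^2 ≤ (⌈β^2⌉₊ : ℝ) := Nat.le_ceil _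
      _ ≤ n := by exact_mod_cast Nat.le_of_succ_le h1
  have hDn : D ≤ n := by
    have h1 : ⌈D⌉₊ + 1 ≤ n := le_trans (le_trans (le_max_right _ _) (le_max_right _ _)) hn
    calc D ≤ (⌈D⌉₊ : ℝ) := Nat.le_ceil _
      _ ≤ n := by exact_mod_cast Nat.le_of_succ_le h1
  have hsq : (0:ℝ) < Real.sqrt n := Real.sqrt_pos.mpr hn0
  have hsq1 : (1:ℝ) ≤ Real.sqrt n := by
    rw [show (1:ℝ) = Real.sqrt 1 by simp]
    exact Real.sqrt_le_sqrt hn1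
  set c : ℝ := β / Real.sqrt n with hc_def
  have hc : 0 < c := by positivity
  have hc1 : c ≤ 1 := by
    rw [hc_def, div_le_one hsq]
    rw [show Real.sqrt n = Real.sqrt n from rfl]
    have : β ≤ Real.sqrt n := by
      rw [show β = Real.sqrt (β^2) by rw [Real.sqrt_sq hβ.le]]
      exact Real.sqrt_le_sqrt hβ2n
    exact this
  have hcsq : c^2 = β^2 / n := by
    rw [hc_def, div_pow, Real.sq_sqrt hn0.le]
  set T : ℝ := (2:ℝ)^N with hT_def
  have hT : 0 < T := by positivity
  have hT1 : 1 ≤ T := one_le_pow₀ (by norm_num)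
  have hlogT : Real.log T = N * Real.log 2 := by
    rw [hT_def, Real.log_pow]
  -- N is large
  have hlogb1 : (1:ℝ) ≤ Real.logb 2 n := by
    rw [show (1:ℝ) = Real.logb 2 2 by simp]
    exact Real.logb_le_logb_of_le (by norm_num) (by norm_num) (by exact_mod_cast hn2)
  have hE11 : (11:ℝ) ≤ 3 * α + 21 * k / 2 + 11 := by nlinarith
  have hN11 : (11:ℝ) ≤ N := by
    calc (11:ℝ) = 11 * 1 := by ring
      _ ≤ (3 * α + 21 * k / 2 + 11) * Real.logb 2 n := by
          apply mul_le_mul hE11 hlogb1 one_pos.le (by linarith)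
      _ ≤ N := hN1
  have hNpos : (0:ℝ) < N := by linarith
  have hlog2 : (0.6931471803:ℝ) < Real.log 2 := Real.log_two_gt_d9
  have hlogT2 : 2 ≤ Real.log T := by
    rw [hlogT]; nlinarith
  have hlogTc : 2 ≤ Real.log T / c := by
    rw [le_div_iff₀ hc]; nlinarith
  -- the set rewrite
  have hxrw : ∀ x : ℝ, β * x / Real.sqrt n = c * x := by
    intro x; rw [hc_def]; ring
  have hsetrw : {x : ℝ | ⌊(2:ℝ)^N * Real.exp (β * x / Real.sqrt n)⌋ ≡ (ℓ:ℤ) [ZMOD (p:ℤ)]}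
      = {x : ℝ | ⌊T * Real.exp (c*x)⌋ ≡ (ℓ:ℤ) [ZMOD (p:ℤ)]} := by
    ext x; rw [mem_setOf_eq, mem_setOf_eq, hxrw x, hT_def]
  rw [hsetrw]
  have hp0 : 0 < p := hpprime.pos
  have hℓp : ℓ < p := by have := hpprime.two_le; omega
  -- sequence a
  set a : ℕ → ℝ := fun m =>
    ((gaussianReal 0 1) {x : ℝ | ⌊T * Real.exp (c*x)⌋ = (m:ℤ)}).toReal with ha_def
  have h0 : ∀ m, 0 ≤ a m := fun m => ENNReal.toReal_nonneg
  -- integral formula for m ≥ 1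
  have haf : ∀ m : ℕ, 1 ≤ m → a m = ∫ t in (m:ℝ)..((m:ℝ)+1), fdens c T t := by
    intro m hm
    have hm0 : (0:ℝ) < m := by exact_mod_cast hm
    have hle : (Real.log m - Real.log T)/c ≤ (Real.log ((m:ℝ)+1) - Real.log T)/c := by
      apply (div_le_div_iff_of_pos_right hc).mpr
      have := Real.log_le_log hm0 (by linarith : (m:ℝ) ≤ (m:ℝ)+1)
      linarith
    rw [ha_def]
    simp only
    rw [floor_set_eq hc hT m hm, gauss_Ico hle, gauss_subst hc hT hm0 (by linarith)]
  -- unimodality constants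
  set tstar : ℝ := T * Real.exp (-(c^2)) with htstar_def
  have htstar0 : 0 < tstar := by positivity
  set K : ℕ := ⌈tstar⌉₊ with hK_def
  have hKpos : 0 < K := Nat.ceil_pos.mpr htstar0
  set s : ℝ := Real.exp (c^2/2) / (c*T) with hs_def
  have hs0 : 0 ≤ s := by positivity
  have hbnd : ∀ m, 1 ≤ m → a m ≤ s := by
    intro m hm
    rw [haf m hm]
    exact am_le hc hT hm
  have hinc : ∀ m, 1 ≤ m → m + 3 ≤ K → a m ≤ a (m+1) := by
    intro m hm hmK
    rw [haf m hm, haf (m+1) (by omega)]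
    have hcast : ((m+1 : ℕ):ℝ) = (m:ℝ)+1 := by push_cast; ring
    rw [hcast, show (m:ℝ)+1+1 = (m:ℝ)+2 by ring]
    have hceil : (K:ℝ) < tstar + 1 := Nat.ceil_lt_add_one htstar0.le
    have hcK : (m:ℝ) + 3 ≤ (K:ℝ) := by exact_mod_cast hmK
    exact am_mono_inc hc hT hm (by linarith)
  have hdec : ∀ m, K ≤ m → a (m+1) ≤ a m := by
    intro m hmK
    have hm : 1 ≤ m := le_trans hKpos hmK
    rw [haf m hm, haf (m+1) (by omega)]
    have hcast : ((m+1 : ℕ):ℝ) = (m:ℝ)+1 := by push_cast; ring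
    rw [hcast, show (m:ℝ)+1+1 = (m:ℝ)+2 by ring]
    have hle2 : tstar ≤ (m:ℝ) := le_trans (Nat.le_ceil tstar) (by exact_mod_cast hmK)
    exact am_mono_dec hc hT hm hle2
  have ha0 : a 0 ≤ 1/T := by
    rw [ha_def]
    simp only
    rw [show ((0:ℕ):ℤ) = (0:ℤ) by simp, floor_set_zero hc hT, gauss_Iio]
    have h1 : -Real.log T/c ≤ -2 := by
      rw [neg_div]
      linarith
    calc ∫ x in Iio (-Real.log T/c), gaussianPDFReal 0 1 x
        ≤ Real.exp (-Real.log T/c) := tail_bound h1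
      _ ≤ Real.exp (-Real.log T) := by
          apply Real.exp_le_exp.mpr
          rw [neg_div, neg_le_neg_iff, le_div_iff₀ hc]
          nlinarith
      _ = 1/T := by
          rw [Real.exp_neg, Real.exp_log hT, one_div]
  set V : ℝ := 11 * (1/T) + 10 * s with hV_def
  have hV : ∀ M, ∑ m ∈ Finset.range M, |a m - a (m+1)| ≤ V := by
    intro M
    calc ∑ m ∈ Finset.range M, |a m - a (m+1)| ≤ 11 * a 0 + 10 * s :=
          tv_bound a s K h0 hs0 hbnd hinc hdec M
      _ ≤ V := by rw [hV_def]; linarith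
  have hsum : HasSum a 1 := hasSum_a hc hT
  have hmain : |(∑' j : ℕ, a (j * p + ℓ)) - 1 / p| ≤ V :=
    block_bound a h0 hsum p ℓ hp0 hℓp V hV
  rw [mu_residue hc hT p ℓ hp0 hℓp]
  have hrw2 : (∑' j : ℕ, ((gaussianReal 0 1)
      {x : ℝ | ⌊T * Real.exp (c*x)⌋ = ((j*p+ℓ : ℕ):ℤ)}).toReal) = ∑' j : ℕ, a (j*p+ℓ) := rfl
  rw [hrw2]
  -- final numeric bound : V ≤ 1 / (N * n^(5k+4))
  have hden : (0:ℝ) < (N:ℝ) * (n:ℝ)^(5*k+4 : ℝ) := by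
    apply mul_pos hNpos (Real.rpow_pos_of_pos hn0 _)
  refine le_trans hmain ?_
  -- bound s
  have hs_le : s ≤ Real.exp (β^2/2) * Real.sqrt n / (β*T) := by
    have h1 : Real.exp (c^2/2) ≤ Real.exp (β^2/2) := by
      apply Real.exp_le_exp.mpr
      rw [hcsq]
      have : β^2 / n ≤ β^2 := div_le_self (sq_nonneg β) hn1
      linarith
    have h2 : s = Real.exp (c^2/2) * Real.sqrt n / (β*T) := by
      rw [hs_def, hc_def]
      field_simp
    rw [h2]
    gcongr
  have hV_le : V ≤ D * Real.sqrt n / T := by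
    have hDX : D * Real.sqrt n / T
        = 11 * Real.sqrt n / T + 10 * (Real.exp (β^2/2) * Real.sqrt n / (β*T)) := by
      rw [hD_def]
      field_simp
    have h11 : 11 * (1/T) ≤ 11 * Real.sqrt n / T := by
      rw [mul_one_div]
      gcongr
      nlinarith
    rw [hV_def, hDX]
    have h10 : 10 * s ≤ 10 * (Real.exp (β^2/2) * Real.sqrt n / (β*T)) := by linarith [hs_le]
    linarith
  have hfinal : D * Real.sqrt n / T ≤ 1 / ((N:ℝ) * (n:ℝ)^(5*k+4 : ℝ)) := by
    rw [div_le_div_iff₀ hT hden]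
    have hTE : (n:ℝ)^((3*α+21*k/2+11 : ℝ)) ≤ T := by
      have e1 : T = (2:ℝ)^(N:ℝ) := by rw [hT_def, Real.rpow_natCast]
      have e2 : (2:ℝ)^((3*α+21*k/2+11) * Real.logb 2 n) ≤ (2:ℝ)^(N:ℝ) :=
        Real.rpow_le_rpow_of_exponent_le one_le_two hN1
      have e3 : (2:ℝ)^((3*α+21*k/2+11) * Real.logb 2 n) = (n:ℝ)^((3*α+21*k/2+11 : ℝ)) := by
        rw [mul_comm, Real.rpow_mul (by norm_num : (0:ℝ) ≤ 2),
          Real.rpow_logb (by norm_num) (by norm_num) hn0]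
      rw [e1, ← e3]
      exact e2
    have hsqrt_eq : Real.sqrt n = (n:ℝ)^((1:ℝ)/2) := Real.sqrt_eq_rpow _
    have hstep : D * Real.sqrt n * ((N:ℝ) * (n:ℝ)^(5*k+4:ℝ))
        ≤ (n:ℝ)^(1:ℝ) * (n:ℝ)^((1:ℝ)/2) * ((n:ℝ)^α * (n:ℝ)^(5*k+4:ℝ)) := by
      rw [hsqrt_eq]
      apply mul_le_mul
      · apply mul_le_mul (by rwa [Real.rpow_one]) le_rfl (by positivity) (by positivity)
      · apply mul_le_mul hN2 le_rfl (by positivity) (by positivity)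
      · positivity
      · positivity
    have hcollect : (n:ℝ)^(1:ℝ) * (n:ℝ)^((1:ℝ)/2) * ((n:ℝ)^α * (n:ℝ)^(5*k+4:ℝ))
        = (n:ℝ)^((1 + 1/2 + (α + (5*k+4)) : ℝ)) := by
      rw [← Real.rpow_add hn0, ← Real.rpow_add hn0, ← Real.rpow_add hn0]
    have hexp_le : ((1:ℝ) + 1/2 + (α + (5*k+4))) ≤ 3*α + 21*k/2 + 11 := by linarith
    calc D * Real.sqrt n * ((N:ℝ) * (n:ℝ)^(5*k+4:ℝ))
        ≤ (n:ℝ)^(1:ℝ) * (n:ℝ)^((1:ℝ)/2) * ((n:ℝ)^α * (n:ℝ)^(5*k+4:ℝ)) := hstep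
      _ = (n:ℝ)^((1 + 1/2 + (α + (5*k+4)) : ℝ)) := hcollect
      _ ≤ (n:ℝ)^((3*α+21*k/2+11:ℝ)) := Real.rpow_le_rpow_of_exponent_le hn1 hexp_le
      _ ≤ T := hTE
      _ = 1 * T := (one_mul T).symm
  calc V ≤ D * Real.sqrt n / T := hV_le
    _ ≤ 1 / ((N:ℝ) * (n:ℝ)^(5*k+4:ℝ)) := hfinal
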